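/- Let d = (2, √3) and P = (x, α√3) with 0 < x < 1/2 and (1+x)/3 < α < 1 - x, and let U₀ = (2 - x, √3(1 + x(2-x)/(3(1-α)))). Then (P - d) · (U₀ - d) = 0. -/

import Mathlib

open RealInnerProductSpace

theorem stmt_3 (x α : ℝ) (hx0 : 0 < x) (hx : x < 1/2)
    (hα0 : (1 + x)/3 < α) (hα1 : α < 1 - x) :
    let d : EuclideanSpace ℝ (Fin 2) := !₂[2, Real.sqrt 3]
    let P : EuclideanSpace ℝ (Fin 2) := !₂[x, α * Real.sqrt 3]
    let U₀ : EuclideanSpace ℝ (Fin 2) := !₂[2 - x, Real.sqrt 3 * (1 + x * (2 - x) / (3 * (1 - α)))]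
    ⟪P - d, U₀ - d⟫ = 0 := by
  intro d P U₀
  have hα : 1 - α ≠ 0 := by nlinarith
  have h3 : Real.sqrt 3 * Real.sqrt 3 = 3 := Real.mul_self_sqrt (by norm_num)
  simp only [d, P, U₀, EuclideanSpace.inner_eq_star_dotProduct]
  simp [dotProduct, Fin.sum_univ_two]
  field_simp
  linear_combination (α - 1) * x * (2 - x) * h3
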